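/- arXiv:2202.06450 — 2 statements merged into one kernel-verified Lean document; each statement's English description precedes it below -/
import Mathlib

section
/- Let A be a real symmetric d×d matrix such that A − I is positive semidefinite, and let Δ be a real symmetric d×d matrix with |Δ_{ij}| ≤ ε for all entries, where ε > 0 and d·ε < 1. Then for every φ ∈ ℝ^d with ‖φ‖ ≤ 1, | √(φᵀ (A+Δ)^{-1} φ) − √(φᵀ A^{-1} φ) | ≤ √( d·ε/(1 − d·ε) ). -/
open Matrix

private lemma dot_self_nonneg' {d : ℕ} (x : Fin d → ℝ) : 0 ≤ x ⬝ᵥ x :=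
  Finset.sum_nonneg fun i _ => mul_self_nonneg (x i)

private lemma cs' {d : ℕ} (x y : Fin d → ℝ) :
    x ⬝ᵥ y ≤ Real.sqrt (x ⬝ᵥ x) * Real.sqrt (y ⬝ᵥ y) := by
  have := Real.sum_mul_le_sqrt_mul_sqrt Finset.univ x y
  simpa [dotProduct, sq] using this

private lemma abs_cs' {d : ℕ} (x y : Fin d → ℝ) :
    |x ⬝ᵥ y| ≤ Real.sqrt (x ⬝ᵥ x) * Real.sqrt (y ⬝ᵥ y) := by
  rcases abs_cases (x ⬝ᵥ y) with ⟨h, _⟩ | ⟨h, _⟩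
  · rw [h]; exact cs' x y
  · rw [h]
    have := cs' (-x) y
    have hx : (-x) ⬝ᵥ (-x) = x ⬝ᵥ x := by simp
    have hxy : (-x) ⬝ᵥ y = -(x ⬝ᵥ y) := by simp
    rw [hx, hxy] at this
    exact this

private lemma sum_abs_le {d : ℕ} (x : Fin d → ℝ) :
    ∑ i, |x i| ≤ Real.sqrt d * Real.sqrt (x ⬝ᵥ x) := by
  have h1 : (∑ i, |x i|) ^ 2 ≤ (d : ℝ) * (x ⬝ᵥ x) := by
    have := sq_sum_le_card_mul_sum_sq (s := (Finset.univ : Finset (Fin d)))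
      (f := fun i => |x i|)
    simpa [dotProduct, sq_abs, sq] using this
  have h2 : ∑ i, |x i| = Real.sqrt ((∑ i, |x i|) ^ 2) := by
    rw [Real.sqrt_sq (Finset.sum_nonneg fun i _ => abs_nonneg _)]
  rw [h2, ← Real.sqrt_mul (by positivity)]
  exact Real.sqrt_le_sqrt h1

private lemma delta_bound {d : ℕ} (Δ : Matrix (Fin d) (Fin d) ℝ) (ε : ℝ)
    (hε0 : 0 ≤ ε) (hΔ : ∀ i j, |Δ i j| ≤ ε) (x y : Fin d → ℝ) :
    |x ⬝ᵥ Δ *ᵥ y| ≤ (d : ℝ) * ε * (Real.sqrt (x ⬝ᵥ x) * Real.sqrt (y ⬝ᵥ y)) := by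
  have h1 : |x ⬝ᵥ Δ *ᵥ y| ≤ ε * ((∑ i, |x i|) * (∑ j, |y j|)) := by
    calc |x ⬝ᵥ Δ *ᵥ y| = |∑ i, ∑ j, x i * (Δ i j * y j)| := by
          simp [dotProduct, mulVec, Finset.mul_sum]
      _ ≤ ∑ i, |∑ j, x i * (Δ i j * y j)| := Finset.abs_sum_le_sum_abs _ _
      _ ≤ ∑ i, ∑ j, |x i * (Δ i j * y j)| :=
          Finset.sum_le_sum fun i _ => Finset.abs_sum_le_sum_abs _ _
      _ ≤ ∑ i, ∑ j, |x i| * (ε * |y j|) := by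
          refine Finset.sum_le_sum fun i _ => Finset.sum_le_sum fun j _ => ?_
          rw [abs_mul, abs_mul]
          exact mul_le_mul_of_nonneg_left
            (mul_le_mul_of_nonneg_right (hΔ i j) (abs_nonneg _)) (abs_nonneg _)
      _ = ε * ((∑ i, |x i|) * (∑ j, |y j|)) := by
          rw [Finset.sum_mul_sum, Finset.mul_sum]
          refine Finset.sum_congr rfl fun i _ => ?_
          rw [Finset.mul_sum]
          exact Finset.sum_congr rfl fun j _ => by ring
  have h2 := sum_abs_le x
  have h3 := sum_abs_le y
  have hd : Real.sqrt d * Real.sqrt d = (d : ℝ) := Real.mul_self_sqrt (by positivity)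
  calc |x ⬝ᵥ Δ *ᵥ y| ≤ ε * ((∑ i, |x i|) * (∑ j, |y j|)) := h1
    _ ≤ ε * ((Real.sqrt d * Real.sqrt (x ⬝ᵥ x)) * (Real.sqrt d * Real.sqrt (y ⬝ᵥ y))) := by
        refine mul_le_mul_of_nonneg_left ?_ hε0
        exact mul_le_mul h2 h3 (Finset.sum_nonneg fun i _ => abs_nonneg _) (by positivity)
    _ = ε * ((Real.sqrt d * Real.sqrt d) * (Real.sqrt (x ⬝ᵥ x) * Real.sqrt (y ⬝ᵥ y))) := by
        ring
    _ = (d : ℝ) * ε * (Real.sqrt (x ⬝ᵥ x) * Real.sqrt (y ⬝ᵥ y)) := by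
        rw [hd]; ring

private lemma sqrt_diff_bound (a b : ℝ) (ha : 0 ≤ a) (hb : 0 ≤ b) :
    |Real.sqrt a - Real.sqrt b| ≤ Real.sqrt |a - b| := by
  have key : ∀ u v : ℝ, 0 ≤ v → v ≤ u →
      Real.sqrt u - Real.sqrt v ≤ Real.sqrt (u - v) := by
    intro u v hv huv
    have h1 : Real.sqrt u ≤ Real.sqrt v + Real.sqrt (u - v) := by
      have hs := Real.sq_sqrt (le_trans hv huv)
      have ht := Real.sq_sqrt hv
      have hr := Real.sq_sqrt (sub_nonneg.2 huv)
      have hsn := Real.sqrt_nonneg u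
      have htn := Real.sqrt_nonneg v
      have hrn := Real.sqrt_nonneg (u - v)
      nlinarith [mul_nonneg htn hrn, sq_nonneg (Real.sqrt v + Real.sqrt (u - v) - Real.sqrt u)]
    linarith
  rcases le_total b a with h | h
  · rw [abs_of_nonneg (sub_nonneg.2 (Real.sqrt_le_sqrt h)), abs_of_nonneg (sub_nonneg.2 h)]
    exact key a b hb h
  · rw [abs_of_nonpos (sub_nonpos.2 (Real.sqrt_le_sqrt h)), abs_of_nonpos (sub_nonpos.2 h),
      neg_sub, neg_sub]
    exact key b a ha h

private lemma inv_bounds {d : ℕ} (N : Matrix (Fin d) (Fin d) ℝ) (c : ℝ) (hc : 0 < c)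
    (hdet : IsUnit N.det)
    (hN : ∀ x : Fin d → ℝ, c * (x ⬝ᵥ x) ≤ x ⬝ᵥ N *ᵥ x) (x : Fin d → ℝ) :
    Real.sqrt ((N⁻¹ *ᵥ x) ⬝ᵥ (N⁻¹ *ᵥ x)) ≤ Real.sqrt (x ⬝ᵥ x) / c ∧
    0 ≤ x ⬝ᵥ N⁻¹ *ᵥ x ∧ x ⬝ᵥ N⁻¹ *ᵥ x ≤ (x ⬝ᵥ x) / c := by
  set y := N⁻¹ *ᵥ x with hy
  have hxy : N *ᵥ y = x := by
    rw [hy, mulVec_mulVec, Matrix.mul_nonsing_inv _ hdet, one_mulVec]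
  have hkey : c * (y ⬝ᵥ y) ≤ y ⬝ᵥ x := by
    have := hN y; rwa [hxy] at this
  set s := Real.sqrt (y ⬝ᵥ y) with hs
  set t := Real.sqrt (x ⬝ᵥ x) with ht
  have hs2 : s ^ 2 = y ⬝ᵥ y := Real.sq_sqrt (dot_self_nonneg' y)
  have ht2 : t ^ 2 = x ⬝ᵥ x := Real.sq_sqrt (dot_self_nonneg' x)
  have hsn : 0 ≤ s := Real.sqrt_nonneg _
  have htn : 0 ≤ t := Real.sqrt_nonneg _
  have hcs : y ⬝ᵥ x ≤ s * t := cs' y x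
  have hst : c * s ≤ t := by
    have hkey2 : c * s ^ 2 ≤ s * t := by rw [hs2]; exact le_trans hkey hcs
    rcases eq_or_lt_of_le hsn with h0 | h0
    · rw [← h0]; simpa using htn
    · nlinarith [hkey2]
  have h1 : s ≤ t / c := by
    rw [le_div_iff₀ hc]; nlinarith
  have hq : x ⬝ᵥ N⁻¹ *ᵥ x = y ⬝ᵥ x := by rw [← hy, dotProduct_comm]
  refine ⟨h1, ?_, ?_⟩
  · rw [hq]
    exact le_trans (mul_nonneg hc.le (dot_self_nonneg' y)) hkey
  · rw [hq]
    calc y ⬝ᵥ x ≤ s * t := hcs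
      _ ≤ (t / c) * t := mul_le_mul_of_nonneg_right h1 htn
      _ = (x ⬝ᵥ x) / c := by rw [← ht2]; ring

/-- Matrix perturbation for square roots of quadratic forms: if `A ⪰ I` is real
symmetric and `Δ` is real symmetric with entries bounded by `ε` where `d·ε < 1`,
then for every unit-norm vector `φ`,
`|√(φᵀ(A+Δ)⁻¹φ) − √(φᵀA⁻¹φ)| ≤ √(d ε / (1 − d ε))`. -/
theorem matrix_perturbation_sqrt
    (d : ℕ) (A Δ : Matrix (Fin d) (Fin d) ℝ) (ε : ℝ)
    (hAsymm : A.IsSymm) (hA : (A - 1).PosSemidef)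
    (hΔsymm : Δ.IsSymm) (hΔ : ∀ i j, |Δ i j| ≤ ε)
    (hε : 0 < ε) (hdε : (d : ℝ) * ε < 1) :
    ∀ φ : EuclideanSpace ℝ (Fin d), ‖φ‖ ≤ 1 →
      |Real.sqrt (φ ⬝ᵥ ((A + Δ)⁻¹).mulVec φ) - Real.sqrt (φ ⬝ᵥ A⁻¹.mulVec φ)| ≤
        Real.sqrt ((d : ℝ) * ε / (1 - (d : ℝ) * ε)) := by
  intro φ hφ
  set c : ℝ := 1 - (d : ℝ) * ε with hcdef
  have hc : 0 < c := by simp [hcdef]; linarith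
  -- quadratic form lower bounds
  have hA1 : ∀ x : Fin d → ℝ, 1 * (x ⬝ᵥ x) ≤ x ⬝ᵥ A *ᵥ x := by
    intro x
    have := hA.dotProduct_mulVec_nonneg x
    simp only [star_trivial, sub_mulVec, one_mulVec, dotProduct_sub] at this
    linarith [this]
  have hΔq : ∀ x : Fin d → ℝ, |x ⬝ᵥ Δ *ᵥ x| ≤ (d : ℝ) * ε * (x ⬝ᵥ x) := by
    intro x
    have h := delta_bound Δ ε hε.le hΔ x x
    have : Real.sqrt (x ⬝ᵥ x) * Real.sqrt (x ⬝ᵥ x) = x ⬝ᵥ x :=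
      Real.mul_self_sqrt (dot_self_nonneg' x)
    rwa [this] at h
  have hB1 : ∀ x : Fin d → ℝ, c * (x ⬝ᵥ x) ≤ x ⬝ᵥ (A + Δ) *ᵥ x := by
    intro x
    have h1 := hA1 x
    have h2 := (abs_le.1 (hΔq x)).1
    simp only [add_mulVec, dotProduct_add]
    rw [hcdef]
    nlinarith [h1, h2, dot_self_nonneg' x]
  -- positive definiteness and invertibility
  have hAherm : A.IsHermitian := by
    rwa [IsHermitian, conjTranspose_eq_transpose_of_trivial]
  have hBherm : (A + Δ).IsHermitian := by
    rw [IsHermitian, conjTranspose_eq_transpose_of_trivial, transpose_add, hAsymm, hΔsymm]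
  have hdotpos : ∀ x : Fin d → ℝ, x ≠ 0 → 0 < x ⬝ᵥ x := by
    intro x hx
    rcases lt_or_eq_of_le (dot_self_nonneg' x) with h | h
    · exact h
    · exact absurd (dotProduct_self_eq_zero.1 h.symm) hx
  have hApos : A.PosDef := by
    refine PosDef.of_dotProduct_mulVec_pos hAherm fun x hx => ?_
    simp only [star_trivial]
    exact lt_of_lt_of_le (by simpa using hdotpos x hx) (hA1 x)
  have hBpos : (A + Δ).PosDef := by
    refine PosDef.of_dotProduct_mulVec_pos hBherm fun x hx => ?_
    simp only [star_trivial]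
    exact lt_of_lt_of_le (mul_pos hc (hdotpos x hx)) (hB1 x)
  have hAdet : IsUnit A.det := hApos.det_pos.ne'.isUnit
  have hBdet : IsUnit (A + Δ).det := hBpos.det_pos.ne'.isUnit
  -- vectors
  set x : Fin d → ℝ := (φ : Fin d → ℝ) with hxdef
  have hφx : Real.sqrt (x ⬝ᵥ x) ≤ 1 := by
    have : Real.sqrt (x ⬝ᵥ x) = ‖φ‖ := by
      rw [EuclideanSpace.norm_eq]
      congr 1
      simp [hxdef, dotProduct, sq, Real.norm_eq_abs, abs_mul_abs_self]
    rw [this]; exact hφ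
  have hAinv := inv_bounds A 1 one_pos hAdet (by simpa using hA1) x
  have hBinv := inv_bounds (A + Δ) c hc hBdet hB1 x
  set u : Fin d → ℝ := (A + Δ)⁻¹ *ᵥ x with hu
  set v : Fin d → ℝ := A⁻¹ *ᵥ x with hv
  -- difference identity
  have hBsymm : ((A + Δ)⁻¹)ᵀ = (A + Δ)⁻¹ := by
    have h : (A + Δ)ᵀ = A + Δ := by rw [transpose_add, hAsymm, hΔsymm]
    rw [transpose_nonsing_inv, h]
  have hdiff : (A + Δ)⁻¹ - A⁻¹ = -((A + Δ)⁻¹ * Δ * A⁻¹) := by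
    have h1 : (A + Δ)⁻¹ * Δ * A⁻¹ = (A + Δ)⁻¹ * ((A + Δ) - A) * A⁻¹ := by
      rw [add_sub_cancel_left]
    rw [h1, Matrix.mul_sub, Matrix.sub_mul, Matrix.nonsing_inv_mul _ hBdet,
      Matrix.one_mul]
    rw [Matrix.mul_assoc, Matrix.mul_nonsing_inv _ hAdet, Matrix.mul_one, neg_sub]
  have hquad : x ⬝ᵥ (A + Δ)⁻¹ *ᵥ x - x ⬝ᵥ A⁻¹ *ᵥ x = -(u ⬝ᵥ Δ *ᵥ v) := by
    have h1 : x ⬝ᵥ (A + Δ)⁻¹ *ᵥ x - x ⬝ᵥ A⁻¹ *ᵥ x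
        = x ⬝ᵥ ((A + Δ)⁻¹ - A⁻¹) *ᵥ x := by
      rw [sub_mulVec, dotProduct_sub]
    rw [h1, hdiff]
    have h2 : x ⬝ᵥ (-((A + Δ)⁻¹ * Δ * A⁻¹)) *ᵥ x = -(x ⬝ᵥ ((A + Δ)⁻¹ * Δ * A⁻¹) *ᵥ x) := by
      rw [neg_mulVec, dotProduct_neg]
    rw [h2]
    congr 1
    rw [← mulVec_mulVec, ← mulVec_mulVec, dotProduct_mulVec x ((A+Δ)⁻¹),
      ← mulVec_transpose, hBsymm]
  -- bound the difference
  have hub : Real.sqrt (u ⬝ᵥ u) ≤ 1 / c := by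
    refine le_trans hBinv.1 ?_
    exact (div_le_div_iff_of_pos_right hc).2 hφx
  have hvb : Real.sqrt (v ⬝ᵥ v) ≤ 1 := by
    refine le_trans hAinv.1 ?_
    simpa using hφx
  have hdbound : |x ⬝ᵥ (A + Δ)⁻¹ *ᵥ x - x ⬝ᵥ A⁻¹ *ᵥ x| ≤ (d : ℝ) * ε / c := by
    rw [hquad, abs_neg]
    refine le_trans (delta_bound Δ ε hε.le hΔ u v) ?_
    have hde : (0:ℝ) ≤ (d : ℝ) * ε := by positivity
    calc (d : ℝ) * ε * (Real.sqrt (u ⬝ᵥ u) * Real.sqrt (v ⬝ᵥ v))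
        ≤ (d : ℝ) * ε * ((1 / c) * 1) := by
          refine mul_le_mul_of_nonneg_left ?_ hde
          exact mul_le_mul hub hvb (Real.sqrt_nonneg _) (by positivity)
      _ = (d : ℝ) * ε / c := by ring
  -- finish
  have ha : 0 ≤ x ⬝ᵥ (A + Δ)⁻¹ *ᵥ x := hBinv.2.1
  have hb : 0 ≤ x ⬝ᵥ A⁻¹ *ᵥ x := hAinv.2.1
  refine le_trans (sqrt_diff_bound _ _ ha hb) ?_
  refine Real.sqrt_le_sqrt ?_
  exact hdbound
end

section
/- Let μ_1, …, μ_m be Borel probability measures on ℝ^d, each supported on the closed unit ball {φ : ‖φ‖ ≤ 1}. For i = 1, …, m define the real d×d matrix Σ_i = 2I + Σ_{j=1}^{i−1} ∫ φφᵀ dμ_j(φ). Then Σ_{i=1}^m ∫ √( φᵀ Σ_i^{-1} φ ) dμ_i(φ) ≤ √( 2·m·d·log(1 + m/d) ); in particular, min_{1 ≤ i ≤ m} ∫ √( φᵀ Σ_i^{-1} φ ) dμ_i(φ) ≤ √( 2·d·log(1 + m/d)/m ). -/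
open Matrix MeasureTheory

section Aux

variable {n : Type*} [Fintype n] [DecidableEq n]

lemma dot_inv_le {n : Type*} [Fintype n] [DecidableEq n] {A : Matrix n n ℝ} (hA : A.PosDef)
    (h2 : (A - (2 : ℝ) • 1).PosSemidef) (x : n → ℝ) :
    x ⬝ᵥ A⁻¹ *ᵥ x ≤ (x ⬝ᵥ x) / 2 := by
  set y := A⁻¹ *ᵥ x with hy
  have hx : A *ᵥ y = x := by
    rw [hy, mulVec_mulVec, Matrix.mul_nonsing_inv _ (isUnit_iff_ne_zero.mpr hA.det_pos.ne'),
      one_mulVec]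
  have hq1 : x ⬝ᵥ y = y ⬝ᵥ A *ᵥ y := by rw [← hx, dotProduct_comm]
  have h2' : 0 ≤ y ⬝ᵥ (A - (2:ℝ) • 1) *ᵥ y := by simpa using h2.dotProduct_mulVec_nonneg y
  have hexp : y ⬝ᵥ (A - (2:ℝ) • 1) *ᵥ y = y ⬝ᵥ A *ᵥ y - 2 * (y ⬝ᵥ y) := by
    rw [sub_mulVec, dotProduct_sub, smul_mulVec, one_mulVec, dotProduct_smul]
    simp [smul_eq_mul]
  have hyy : 2 * (y ⬝ᵥ y) ≤ x ⬝ᵥ y := by rw [hq1]; linarith [hexp ▸ h2']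
  have hcs : (x ⬝ᵥ y) ^ 2 ≤ (x ⬝ᵥ x) * (y ⬝ᵥ y) := by
    have := Finset.sum_mul_sq_le_sq_mul_sq Finset.univ x y
    simpa [dotProduct, pow_two] using this
  have hq0 : 0 ≤ y ⬝ᵥ y := by
    simpa [dotProduct] using Finset.sum_nonneg fun i _ => mul_self_nonneg (y i)
  have hx0 : 0 ≤ x ⬝ᵥ x := by
    simpa [dotProduct] using Finset.sum_nonneg fun i (_ : i ∈ Finset.univ) => mul_self_nonneg (x i)
  nlinarith [hyy, hcs, hq0, hx0, mul_nonneg hx0 hq0]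


lemma trace_eq_sum_eigen {A : Matrix n n ℝ} (hA : A.IsHermitian) :
    A.trace = ∑ i, hA.eigenvalues i := by
  have hU : (star (hA.eigenvectorUnitary : Matrix n n ℝ)) * (hA.eigenvectorUnitary : Matrix n n ℝ)
      = 1 := by
    exact Matrix.mem_unitaryGroup_iff'.mp hA.eigenvectorUnitary.2
  conv_lhs => rw [hA.spectral_theorem, Unitary.conjStarAlgAut_apply]
  rw [Matrix.trace_mul_cycle, hU, one_mul, Matrix.trace_diagonal]
  simp

lemma det_one_add_eq {A : Matrix n n ℝ} (hA : A.IsHermitian) :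
    (1 + A).det = ∏ i, (1 + hA.eigenvalues i) := by
  set U : Matrix n n ℝ := (hA.eigenvectorUnitary : Matrix n n ℝ) with hUdef
  have hU1 : U * star U = 1 := Matrix.mem_unitaryGroup_iff.mp hA.eigenvectorUnitary.2
  have key : 1 + A = U * (1 + diagonal (RCLike.ofReal ∘ hA.eigenvalues)) * star U := by
    rw [mul_add, add_mul, mul_one, hU1]
    conv_lhs => rw [hA.spectral_theorem, Unitary.conjStarAlgAut_apply]
  rw [key, Matrix.det_mul, Matrix.det_mul, mul_comm, ← mul_assoc, ← Matrix.det_mul, ← Matrix.det_mul]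
  have hU2 : star U * U = 1 := Matrix.mem_unitaryGroup_iff'.mp hA.eigenvectorUnitary.2
  rw [hU2, one_mul]
  rw [← Matrix.diagonal_one, Matrix.diagonal_add, Matrix.det_diagonal]
  simp

lemma aux_le_two_log' {x : ℝ} (h0 : 0 ≤ x) (h1 : x ≤ 1) : x ≤ 2 * Real.log (1 + x) := by
  have hx2 : x / 2 ≤ Real.log (1 + x) := by
    rw [Real.le_log_iff_exp_le (by linarith)]
    have he : Real.exp (x/2) * Real.exp (-(x/2)) = 1 := by rw [← Real.exp_add]; simp
    nlinarith [Real.add_one_le_exp (-(x/2)), Real.exp_pos (x/2)]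
  linarith

open scoped MatrixOrder in
lemma trace_le_two_log_det {A M : Matrix n n ℝ} (hA : A.PosDef) (hM : M.PosSemidef)
    (htr : (A⁻¹ * M).trace ≤ 1) :
    (A⁻¹ * M).trace ≤ 2 * (Real.log (A + M).det - Real.log A.det) := by
  have hAps : A.PosSemidef := hA.posSemidef
  set S := CFC.sqrt A with hSdef
  have hSS : S * S = A := CFC.sqrt_mul_sqrt_self A hAps.nonneg
  have hSpsd : S.PosSemidef := (CFC.sqrt_nonneg A).posSemidef
  have hdetS : S.det ≠ 0 := by
    intro h
    have : A.det = 0 := by rw [← hSS, Matrix.det_mul, h, mul_zero]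
    exact hA.det_pos.ne' this
  have h1 : S * S⁻¹ = 1 := Matrix.mul_nonsing_inv _ (isUnit_iff_ne_zero.mpr hdetS)
  have h2 : S⁻¹ * S = 1 := Matrix.nonsing_inv_mul _ (isUnit_iff_ne_zero.mpr hdetS)
  have hSinv : S⁻¹.IsHermitian := hSpsd.isHermitian.inv
  set N := S⁻¹ * M * S⁻¹ with hNdef
  have hNpsd : N.PosSemidef := by
    have := hM.mul_mul_conjTranspose_same S⁻¹
    rwa [hSinv.eq] at this
  have htrN : N.trace = (A⁻¹ * M).trace := by
    rw [hNdef, Matrix.trace_mul_cycle, ← Matrix.mul_inv_rev, hSS]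
  have hSN : S * N * S = M := by
    rw [hNdef]
    simp only [mul_assoc, h2, mul_one]
    rw [← mul_assoc, h1, one_mul]
  have key : S * (1 + N) * S = A + M := by rw [mul_add, add_mul, mul_one, hSS, hSN]
  have hdet : (A + M).det = A.det * (1 + N).det := by
    rw [← key, Matrix.det_mul, Matrix.det_mul, ← hSS, Matrix.det_mul]
    ring
  have hNh : N.IsHermitian := hNpsd.isHermitian
  have hev0 : ∀ i, 0 ≤ hNh.eigenvalues i := hNpsd.eigenvalues_nonneg
  have hsum : ∑ i, hNh.eigenvalues i = N.trace := (trace_eq_sum_eigen hNh).symm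
  have hev1 : ∀ i, hNh.eigenvalues i ≤ 1 := by
    intro i
    calc hNh.eigenvalues i ≤ ∑ j, hNh.eigenvalues j :=
          Finset.single_le_sum (fun j _ => hev0 j) (Finset.mem_univ i)
      _ = N.trace := hsum
      _ = (A⁻¹ * M).trace := htrN
      _ ≤ 1 := htr
  have hdet1N : (1 + N).det = ∏ i, (1 + hNh.eigenvalues i) := det_one_add_eq hNh
  have hdetpos : 0 < (1 + N).det := by
    rw [hdet1N]
    exact Finset.prod_pos fun i _ => by linarith [hev0 i]
  have hlog : Real.log (1 + N).det = ∑ i, Real.log (1 + hNh.eigenvalues i) := by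
    rw [hdet1N]
    exact Real.log_prod fun i _ => ne_of_gt (by linarith [hev0 i])
  have hmain : N.trace ≤ 2 * Real.log (1 + N).det := by
    rw [← hsum, hlog, Finset.mul_sum]
    exact Finset.sum_le_sum fun i _ => aux_le_two_log' (hev0 i) (hev1 i)
  have hlogeq : Real.log (A + M).det - Real.log A.det = Real.log (1 + N).det := by
    rw [hdet, Real.log_mul hA.det_pos.ne' hdetpos.ne']
    ring
  rw [hlogeq, ← htrN]
  exact hmain

lemma log_det_le_card_log [Nonempty n] {A : Matrix n n ℝ} (hA : A.PosDef) :
    Real.log A.det ≤ (Fintype.card n) * Real.log (A.trace / Fintype.card n) := by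
  have hc0 : 0 < (Fintype.card n : ℝ) := by
    have := Fintype.card_pos (α := n); positivity
  set lam := hA.isHermitian.eigenvalues with hlam
  have hpos : ∀ i, 0 < lam i := hA.eigenvalues_pos
  have hdet : A.det = ∏ i, lam i := by
    have := hA.isHermitian.det_eq_prod_eigenvalues
    simpa using this
  have htr : A.trace = ∑ i, lam i := trace_eq_sum_eigen hA.isHermitian
  have hgm : ∏ i, (lam i) ^ ((Fintype.card n : ℝ)⁻¹) ≤ A.trace / Fintype.card n := by
    have := Real.geom_mean_le_arith_mean_weighted (s := Finset.univ)
      (fun _ : n => (Fintype.card n : ℝ)⁻¹) lam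
      (fun i _ => by positivity) (by simp [Finset.card_univ])
      (fun i _ => (hpos i).le)
    rw [htr]
    calc ∏ i, (lam i) ^ ((Fintype.card n : ℝ)⁻¹) ≤ ∑ i, (Fintype.card n : ℝ)⁻¹ * lam i := this
      _ = (∑ i, lam i) / Fintype.card n := by rw [← Finset.mul_sum]; ring
  have hprodpos : 0 < ∏ i, (lam i) ^ ((Fintype.card n : ℝ)⁻¹) :=
    Finset.prod_pos fun i _ => Real.rpow_pos_of_pos (hpos i) _
  have hdetle : A.det ≤ (A.trace / Fintype.card n) ^ (Fintype.card n) := by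
    have hpow : (∏ i, (lam i) ^ ((Fintype.card n : ℝ)⁻¹)) ^ (Fintype.card n)
        ≤ (A.trace / Fintype.card n) ^ (Fintype.card n) :=
      pow_le_pow_left₀ hprodpos.le hgm _
    calc A.det = ∏ i, lam i := hdet
      _ = (∏ i, (lam i) ^ ((Fintype.card n : ℝ)⁻¹)) ^ (Fintype.card n) := by
          rw [← Finset.prod_pow]
          refine Finset.prod_congr rfl fun i _ => ?_
          rw [← Real.rpow_natCast ((lam i) ^ ((Fintype.card n : ℝ)⁻¹)) (Fintype.card n),
            ← Real.rpow_mul (hpos i).le, inv_mul_cancel₀ hc0.ne', Real.rpow_one]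
      _ ≤ _ := hpow
  have hdetpos : 0 < A.det := hA.det_pos
  calc Real.log A.det ≤ Real.log ((A.trace / Fintype.card n) ^ (Fintype.card n)) :=
        Real.log_le_log hdetpos hdetle
    _ = (Fintype.card n) * Real.log (A.trace / Fintype.card n) := by
        rw [Real.log_pow]

open scoped MatrixOrder in
lemma trace_inv_mul_le_half {A M : Matrix n n ℝ} (hA : A.PosDef)
    (h2 : (A - (2 : ℝ) • 1).PosSemidef) (hM : M.PosSemidef) :
    (A⁻¹ * M).trace ≤ M.trace / 2 := by
  set S := CFC.sqrt M with hSdef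
  have hSS : S * S = M := CFC.sqrt_mul_sqrt_self M hM.nonneg
  have hsymm : ∀ a b, S a b = S b a := fun a b => by
    have := congrFun (congrFun (CFC.sqrt_nonneg M).posSemidef.isHermitian.eq b) a
    simpa [Matrix.conjTranspose_apply] using this
  have h1 : (A⁻¹ * M).trace = (S * (A⁻¹ * S)).trace := by
    rw [← hSS, ← mul_assoc, trace_mul_comm]
  have key : ∀ k, (S * (A⁻¹ * S)) k k
      = (fun a => S a k) ⬝ᵥ A⁻¹ *ᵥ (fun a => S a k) := by
    intro k
    simp only [Matrix.mul_apply, dotProduct, mulVec]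
    exact Finset.sum_congr rfl fun a _ => by rw [hsymm k a]
  have hbound : ∀ k, (S * (A⁻¹ * S)) k k
      ≤ ((fun a => S a k) ⬝ᵥ (fun a => S a k)) / 2 := by
    intro k
    rw [key k]
    exact dot_inv_le hA h2 _
  calc (A⁻¹ * M).trace = ∑ k, (S * (A⁻¹ * S)) k k := by
        rw [h1]; rfl
    _ ≤ ∑ k, ((fun a => S a k) ⬝ᵥ (fun a => S a k)) / 2 :=
        Finset.sum_le_sum fun k _ => hbound k
    _ = (∑ k, (fun a => S a k) ⬝ᵥ (fun a => S a k)) / 2 := by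
        rw [Finset.sum_div]
    _ = M.trace / 2 := by
        congr 1
        rw [← hSS]
        simp only [dotProduct, Matrix.trace, Matrix.diag, Matrix.mul_apply]
        exact Finset.sum_congr rfl fun k _ =>
          Finset.sum_congr rfl fun a _ => by rw [hsymm k a]


variable {d : ℕ}


lemma coord_abs_le_norm (φ : EuclideanSpace ℝ (Fin d)) (a : Fin d) : |φ a| ≤ ‖φ‖ := by
  rw [EuclideanSpace.norm_eq]
  rw [← Real.sqrt_sq_eq_abs]
  apply Real.sqrt_le_sqrt
  have : |φ a| ^ 2 ≤ ∑ i, ‖φ i‖ ^ 2 := by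
    have := Finset.single_le_sum (f := fun i => ‖φ i‖ ^ 2)
      (fun i _ => by positivity) (Finset.mem_univ a)
    simpa [Real.norm_eq_abs, sq_abs] using this
  simpa [sq_abs] using this

lemma coord_continuous (a : Fin d) : Continuous fun φ : EuclideanSpace ℝ (Fin d) => φ a :=
  (EuclideanSpace.proj (𝕜 := ℝ) a).continuous

section Measure

variable (ν : Measure (EuclideanSpace ℝ (Fin d))) [IsProbabilityMeasure ν] (hae : ∀ᵐ φ ∂ν, ‖φ‖ ≤ 1)

include hae in
lemma integrable_coord_mul (a b : Fin d) : Integrable (fun φ : EuclideanSpace ℝ (Fin d) => φ a * φ b) ν := by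
  refine Integrable.mono' (integrable_const 1)
    (((coord_continuous a).mul (coord_continuous b)).aestronglyMeasurable) ?_
  filter_upwards [hae] with φ hφ
  rw [Real.norm_eq_abs, abs_mul]
  calc |φ a| * |φ b| ≤ ‖φ‖ * ‖φ‖ :=
        mul_le_mul (coord_abs_le_norm φ a) (coord_abs_le_norm φ b) (abs_nonneg _) (norm_nonneg _)
    _ ≤ 1 * 1 := mul_le_mul hφ hφ (norm_nonneg _) zero_le_one
    _ = 1 := mul_one 1

lemma quadform_expand (A : Matrix (Fin d) (Fin d) ℝ) (φ : EuclideanSpace ℝ (Fin d)) :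
    φ ⬝ᵥ A *ᵥ φ = ∑ a, ∑ b, A a b * (φ a * φ b) := by
  simp only [dotProduct, mulVec, Finset.mul_sum]
  exact Finset.sum_congr rfl fun a _ => Finset.sum_congr rfl fun b _ => by ring

include hae in
theorem integral_quadform (A : Matrix (Fin d) (Fin d) ℝ) :
    ∫ φ, φ ⬝ᵥ A *ᵥ φ ∂ν
      = (A * Matrix.of (fun a b => ∫ φ, φ a * φ b ∂ν)).trace := by
  have h1 : ∫ φ, φ ⬝ᵥ A *ᵥ φ ∂ν = ∑ a, ∑ b, A a b * ∫ φ, φ a * φ b ∂ν := by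
    rw [integral_congr_ae (Filter.Eventually.of_forall (quadform_expand A))]
    rw [integral_finset_sum _ (fun a _ => integrable_finset_sum _
      (fun b _ => ((integrable_coord_mul ν hae a b).const_mul (A a b))))]
    refine Finset.sum_congr rfl fun a _ => ?_
    rw [integral_finset_sum _ (fun b _ => ((integrable_coord_mul ν hae a b).const_mul _))]
    exact Finset.sum_congr rfl fun b _ => integral_const_mul _ _
  rw [h1]
  simp only [Matrix.trace, Matrix.diag, Matrix.mul_apply, Matrix.of_apply]
  refine Finset.sum_congr rfl fun a _ => Finset.sum_congr rfl fun b _ => ?_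
  congr 1
  exact integral_congr_ae (Filter.Eventually.of_forall fun φ => mul_comm _ _)

include hae in
lemma covmat_posSemidef :
    (Matrix.of (fun a b => ∫ φ, φ a * φ b ∂ν) : Matrix (Fin d) (Fin d) ℝ).PosSemidef := by
  refine Matrix.PosSemidef.of_dotProduct_mulVec_nonneg ?_ ?_
  · ext a b
    simp only [Matrix.conjTranspose_apply, Matrix.of_apply, star_trivial]
    exact integral_congr_ae (Filter.Eventually.of_forall fun φ => mul_comm _ _)
  · intro x
    have hexp : ∀ φ : EuclideanSpace ℝ (Fin d),
        (∑ a, x a * φ a) ^ 2 = ∑ a, ∑ b, (x a * x b) * (φ a * φ b) := by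
      intro φ
      rw [pow_two, Finset.sum_mul_sum]
      exact Finset.sum_congr rfl fun a _ => Finset.sum_congr rfl fun b _ => by ring
    have h1 : star x ⬝ᵥ (Matrix.of (fun a b => ∫ φ, φ a * φ b ∂ν)) *ᵥ x
        = ∫ φ, (∑ a, x a * φ a) ^ 2 ∂ν := by
      rw [integral_congr_ae (Filter.Eventually.of_forall hexp),
        integral_finset_sum _ (fun a _ => integrable_finset_sum _
          (fun b _ => ((integrable_coord_mul ν hae a b).const_mul _)))]
      simp only [dotProduct, mulVec, Matrix.of_apply, star_trivial, Pi.star_apply]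
      rw [show ∀ g : Fin d → ℝ, (∑ a, g a) = ∑ a, g a from fun _ => rfl]
      refine Finset.sum_congr rfl fun a _ => ?_
      rw [integral_finset_sum _ (fun b _ => ((integrable_coord_mul ν hae a b).const_mul _)),
        Finset.mul_sum]
      refine Finset.sum_congr rfl fun b _ => ?_
      rw [integral_const_mul]
      ring
    rw [h1]
    exact integral_nonneg fun φ => sq_nonneg _

include hae in
lemma covmat_trace_le_one :
    (Matrix.of (fun a b => ∫ φ, φ a * φ b ∂ν) : Matrix (Fin d) (Fin d) ℝ).trace ≤ 1 := by
  have h1 : (Matrix.of (fun a b => ∫ φ, φ a * φ b ∂ν) : Matrix (Fin d) (Fin d) ℝ).trace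
      = ∫ φ, (∑ a, φ a * φ a) ∂ν := by
    simp only [Matrix.trace, Matrix.diag, Matrix.of_apply]
    rw [integral_finset_sum _ (fun a _ => integrable_coord_mul ν hae a a)]
  rw [h1]
  have h2 : ∫ φ, (1 : ℝ) ∂ν = 1 := by simp
  rw [← h2]
  refine integral_mono_ae (integrable_finset_sum _
    (fun a _ => integrable_coord_mul ν hae a a)) (integrable_const 1) ?_
  filter_upwards [hae] with φ hφ
  have : ∑ a, φ a * φ a ≤ ‖φ‖ ^ 2 := by
    rw [EuclideanSpace.norm_eq, Real.sq_sqrt (by positivity)]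
    refine le_of_eq (Finset.sum_congr rfl fun a _ => ?_)
    rw [Real.norm_eq_abs, sq_abs, pow_two]
  calc ∑ a, φ a * φ a ≤ ‖φ‖ ^ 2 := this
    _ ≤ 1 := by nlinarith [norm_nonneg φ]

include hae in
lemma integrable_quadform (A : Matrix (Fin d) (Fin d) ℝ) :
    Integrable (fun φ : EuclideanSpace ℝ (Fin d) => φ ⬝ᵥ A *ᵥ φ) ν := by
  have h : (fun φ : EuclideanSpace ℝ (Fin d) => φ ⬝ᵥ A *ᵥ φ)
      = fun φ => ∑ a, ∑ b, A a b * (φ a * φ b) := funext fun φ => quadform_expand A φ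
  rw [h]
  exact integrable_finset_sum _ fun a _ => integrable_finset_sum _
    fun b _ => (integrable_coord_mul ν hae a b).const_mul _

lemma integral_sqrt_le (g : EuclideanSpace ℝ (Fin d) → ℝ) (hg : Integrable g ν)
    (hg0 : ∀ φ, 0 ≤ g φ) :
    ∫ φ, Real.sqrt (g φ) ∂ν ≤ Real.sqrt (∫ φ, g φ ∂ν) := by
  set t := ∫ φ, g φ ∂ν with ht
  have ht0 : 0 ≤ t := integral_nonneg hg0
  refine le_of_forall_pos_le_add fun ε hε => ?_
  set c : ℝ := Real.sqrt t + ε with hc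
  have hc0 : 0 < c := by have := Real.sqrt_nonneg t; linarith
  have hpt : ∀ φ, Real.sqrt (g φ) ≤ g φ / (2 * c) + c / 2 := by
    intro φ
    have h2 : Real.sqrt (g φ) ^ 2 = g φ := Real.sq_sqrt (hg0 φ)
    have h3 : 0 ≤ Real.sqrt (g φ) := Real.sqrt_nonneg _
    have key : 2 * c * Real.sqrt (g φ) ≤ g φ + c ^ 2 := by nlinarith [sq_nonneg (Real.sqrt (g φ) - c)]
    calc Real.sqrt (g φ) = (2 * c * Real.sqrt (g φ)) / (2 * c) := by field_simp
      _ ≤ (g φ + c ^ 2) / (2 * c) := by gcongr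
      _ = g φ / (2 * c) + c / 2 := by field_simp
  have hint : ∫ φ, Real.sqrt (g φ) ∂ν ≤ ∫ φ, (g φ / (2 * c) + c / 2) ∂ν :=
    integral_mono_of_nonneg (Filter.Eventually.of_forall fun φ => Real.sqrt_nonneg (g φ))
      ((hg.div_const _).add (integrable_const _)) (Filter.Eventually.of_forall hpt)
  have hci : ∫ φ, (g φ / (2 * c) + c / 2) ∂ν = t / (2 * c) + c / 2 := by
    rw [integral_add (hg.div_const _) (integrable_const _), integral_div]
    simp [ht]
  have h5 : t / (2 * c) ≤ Real.sqrt t / 2 := by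
    rw [div_le_div_iff₀ (by positivity) two_pos]
    nlinarith [Real.sq_sqrt ht0, Real.sqrt_nonneg t]
  rw [hci] at hint
  calc ∫ φ, Real.sqrt (g φ) ∂ν ≤ t / (2 * c) + c / 2 := hint
    _ ≤ Real.sqrt t / 2 + (Real.sqrt t + ε) / 2 := by rw [hc]; linarith
    _ ≤ Real.sqrt t + ε := by linarith

end Measure
end Aux

/-- Elliptical-potential bound for expected covariance matrices: if `μ_0, …, μ_{m-1}`
are probability measures on the closed unit ball of `ℝ^d` and
`Σ_i = 2I + Σ_{j<i} ∫ φφᵀ dμ_j`, then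
`Σ_{i<m} ∫ √(φᵀ Σ_i⁻¹ φ) dμ_i ≤ √(2 m d log(1 + m/d))`, and in particular the minimum
over `i < m` of `∫ √(φᵀ Σ_i⁻¹ φ) dμ_i` is at most `√(2 d log(1 + m/d) / m)`. -/
theorem expected_covariance_elliptical_potential
    (d m : ℕ) (hd : 0 < d) (hm : 0 < m)
    (μ : ℕ → Measure (EuclideanSpace ℝ (Fin d)))
    (hprob : ∀ j < m, IsProbabilityMeasure (μ j))
    (hsupp : ∀ j < m, μ j {φ | ‖φ‖ ≤ 1} = 1)
    (Sig : ℕ → Matrix (Fin d) (Fin d) ℝ)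
    (hSig : ∀ i, Sig i = (2 : ℝ) • (1 : Matrix (Fin d) (Fin d) ℝ) +
        ∑ j ∈ Finset.range i,
          Matrix.of (fun a b => ∫ φ, φ a * φ b ∂(μ j))) :
    (∑ i ∈ Finset.range m, ∫ φ, Real.sqrt (φ ⬝ᵥ ((Sig i)⁻¹).mulVec φ) ∂(μ i)) ≤
        Real.sqrt (2 * m * d * Real.log (1 + (m : ℝ) / d)) ∧
      ∃ i < m, (∫ φ, Real.sqrt (φ ⬝ᵥ ((Sig i)⁻¹).mulVec φ) ∂(μ i)) ≤
        Real.sqrt (2 * d * Real.log (1 + (m : ℝ) / d) / m) := by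
  haveI : Nonempty (Fin d) := ⟨⟨0, hd⟩⟩
  have hd0 : (0:ℝ) < d := by exact_mod_cast hd
  have hm0 : (0:ℝ) < m := by exact_mod_cast hm
  set Mm : ℕ → Matrix (Fin d) (Fin d) ℝ :=
    fun j => Matrix.of (fun a b => ∫ φ, φ a * φ b ∂(μ j)) with hMm
  have hSig' : ∀ i, Sig i = (2 : ℝ) • (1 : Matrix (Fin d) (Fin d) ℝ) +
      ∑ j ∈ Finset.range i, Mm j := fun i => hSig i
  have hae : ∀ j < m, ∀ᵐ φ ∂(μ j), ‖φ‖ ≤ 1 := by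
    intro j hj
    haveI := hprob j hj
    have hs : MeasurableSet {φ : EuclideanSpace ℝ (Fin d) | ‖φ‖ ≤ 1} :=
      (isClosed_le continuous_norm continuous_const).measurableSet
    have h := (prob_compl_eq_zero_iff hs).mpr (hsupp j hj)
    rw [ae_iff, ← Set.compl_setOf]
    exact h
  have hMpsd : ∀ j, j < m → (Mm j).PosSemidef := fun j hj => by
    haveI := hprob j hj; exact covmat_posSemidef (μ j) (hae j hj)
  have hMtr : ∀ j, j < m → (Mm j).trace ≤ 1 := fun j hj => by
    haveI := hprob j hj; exact covmat_trace_le_one (μ j) (hae j hj)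
  have h2one : ((2:ℝ) • (1 : Matrix (Fin d) (Fin d) ℝ)).PosDef := by
    have h : (2:ℝ) • (1 : Matrix (Fin d) (Fin d) ℝ) = Matrix.diagonal (fun _ => (2:ℝ)) := by
      ext a b; by_cases hab : a = b <;> simp [Matrix.one_apply, hab]
    rw [h]; exact Matrix.posDef_diagonal_iff.mpr fun _ => two_pos
  have hdiff : ∀ i ≤ m, ((Sig i) - (2:ℝ) • 1).PosSemidef := by
    intro i hi
    have h : Sig i - (2:ℝ) • 1 = ∑ j ∈ Finset.range i, Mm j := by
      rw [hSig' i, add_sub_cancel_left]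
    rw [h]
    refine Finset.sum_induction _ _ (fun a b ha hb => ha.add hb) Matrix.PosSemidef.zero ?_
    intro j hj
    exact hMpsd j (lt_of_lt_of_le (Finset.mem_range.mp hj) hi)
  have hPD : ∀ i ≤ m, (Sig i).PosDef := fun i hi => by
    have h := hdiff i hi
    have he : Sig i = (2:ℝ) • 1 + (Sig i - (2:ℝ) • 1) := by abel
    rw [he]; exact h2one.add_posSemidef h
  have hquad0 : ∀ i, i ≤ m → ∀ φ : EuclideanSpace ℝ (Fin d),
      0 ≤ φ ⬝ᵥ ((Sig i)⁻¹) *ᵥ φ := fun i hi φ => by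
    simpa using (hPD i hi).inv.posSemidef.dotProduct_mulVec_nonneg φ
  have hti : ∀ i, i < m → ∫ φ, φ ⬝ᵥ ((Sig i)⁻¹) *ᵥ φ ∂(μ i)
      = ((Sig i)⁻¹ * Mm i).trace := fun i hi => by
    haveI := hprob i hi; exact integral_quadform (μ i) (hae i hi) _
  have hs_le : ∀ i, i < m →
      (∫ φ, Real.sqrt (φ ⬝ᵥ ((Sig i)⁻¹).mulVec φ) ∂(μ i))
        ≤ Real.sqrt (((Sig i)⁻¹ * Mm i).trace) := fun i hi => by
    haveI := hprob i hi
    rw [← hti i hi]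
    exact integral_sqrt_le (μ i) _ (integrable_quadform (μ i) (hae i hi) _)
      (fun φ => hquad0 i hi.le φ)
  have ht_nonneg : ∀ i, i < m → 0 ≤ ((Sig i)⁻¹ * Mm i).trace := fun i hi => by
    haveI := hprob i hi
    rw [← hti i hi]
    exact integral_nonneg (hquad0 i hi.le)
  have ht_half : ∀ i, i < m → ((Sig i)⁻¹ * Mm i).trace ≤ 1 := fun i hi => by
    have h := trace_inv_mul_le_half (hPD i hi.le) (hdiff i hi.le) (hMpsd i hi)
    linarith [hMtr i hi]
  set L : ℕ → ℝ := fun i => Real.log (Sig i).det with hL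
  have htele : ∀ i, i < m → ((Sig i)⁻¹ * Mm i).trace ≤ 2 * (L (i+1) - L i) := fun i hi => by
    have hsucc : Sig (i+1) = Sig i + Mm i := by
      rw [hSig' (i+1), hSig' i, Finset.sum_range_succ, add_assoc]
    have h := trace_le_two_log_det (hPD i hi.le) (hMpsd i hi) (ht_half i hi)
    simp only [hL]
    rw [hsucc]
    exact h
  have hsumt : ∑ i ∈ Finset.range m, ((Sig i)⁻¹ * Mm i).trace ≤ 2 * (L m - L 0) := by
    calc ∑ i ∈ Finset.range m, ((Sig i)⁻¹ * Mm i).trace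
        ≤ ∑ i ∈ Finset.range m, 2 * (L (i+1) - L i) :=
          Finset.sum_le_sum fun i hi => htele i (Finset.mem_range.mp hi)
      _ = 2 * ∑ i ∈ Finset.range m, (L (i+1) - L i) := by rw [Finset.mul_sum]
      _ = 2 * (L m - L 0) := by rw [Finset.sum_range_sub]
  have hL0 : L 0 = d * Real.log 2 := by
    have h0 : Sig 0 = (2:ℝ) • (1 : Matrix (Fin d) (Fin d) ℝ) := by
      rw [hSig' 0]; simp
    simp only [hL]
    rw [h0, Matrix.det_smul, Matrix.det_one, mul_one, Fintype.card_fin, Real.log_pow]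
  have htrSig : (Sig m).trace ≤ 2 * d + m := by
    rw [hSig' m, Matrix.trace_add, Matrix.trace_smul, Matrix.trace_one, Matrix.trace_sum]
    have h : ∑ j ∈ Finset.range m, (Mm j).trace ≤ ∑ j ∈ Finset.range m, (1:ℝ) :=
      Finset.sum_le_sum fun j hj => hMtr j (Finset.mem_range.mp hj)
    simp only [Finset.sum_const, Finset.card_range, nsmul_eq_mul, mul_one] at h
    rw [Fintype.card_fin]
    simp only [smul_eq_mul]
    linarith
  have htrpos : 0 < (Sig m).trace := by
    rw [trace_eq_sum_eigen (hPD m le_rfl).isHermitian]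
    exact Finset.sum_pos (fun i _ => (hPD m le_rfl).eigenvalues_pos i) Finset.univ_nonempty
  set Lg : ℝ := Real.log (1 + (m:ℝ)/d) with hLg
  have hLg0 : 0 ≤ Lg := by
    refine Real.log_nonneg ?_
    have h : 0 ≤ (m:ℝ)/d := by positivity
    linarith
  have hLm : L m - L 0 ≤ d * Lg := by
    have h1 : L m ≤ d * Real.log ((Sig m).trace / d) := by
      simpa [Fintype.card_fin] using log_det_le_card_log (hPD m le_rfl)
    have h2 : (Sig m).trace / (d:ℝ) ≤ 2 * (1 + (m:ℝ)/d) := by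
      rw [div_le_iff₀ hd0]
      have he : 2 * (1 + (m:ℝ)/d) * d = 2*d + 2*m := by field_simp
      rw [he]
      linarith
    have h3 : Real.log ((Sig m).trace / d) ≤ Real.log (2 * (1 + (m:ℝ)/d)) :=
      Real.log_le_log (div_pos htrpos hd0) h2
    have h4 : Real.log (2 * (1 + (m:ℝ)/d)) = Real.log 2 + Lg :=
      Real.log_mul two_ne_zero (by positivity)
    have h5 : L m ≤ d * (Real.log 2 + Lg) := by
      calc L m ≤ d * Real.log ((Sig m).trace / d) := h1
        _ ≤ d * (Real.log 2 + Lg) := by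
            rw [← h4]; exact mul_le_mul_of_nonneg_left h3 hd0.le
    rw [hL0]
    nlinarith
  have hT : ∑ i ∈ Finset.range m, ((Sig i)⁻¹ * Mm i).trace ≤ 2 * d * Lg := by
    calc ∑ i ∈ Finset.range m, ((Sig i)⁻¹ * Mm i).trace ≤ 2 * (L m - L 0) := hsumt
      _ ≤ 2 * (d * Lg) := by linarith
      _ = 2 * d * Lg := by ring
  have hmain : (∑ i ∈ Finset.range m, ∫ φ, Real.sqrt (φ ⬝ᵥ ((Sig i)⁻¹).mulVec φ) ∂(μ i))
      ≤ Real.sqrt (2 * m * d * Lg) := by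
    have hstep1 : (∑ i ∈ Finset.range m, ∫ φ, Real.sqrt (φ ⬝ᵥ ((Sig i)⁻¹).mulVec φ) ∂(μ i))
        ≤ ∑ i ∈ Finset.range m, Real.sqrt (((Sig i)⁻¹ * Mm i).trace) :=
      Finset.sum_le_sum fun i hi => hs_le i (Finset.mem_range.mp hi)
    have hsq : (∑ i ∈ Finset.range m, Real.sqrt (((Sig i)⁻¹ * Mm i).trace)) ^ 2
        ≤ m * ∑ i ∈ Finset.range m, ((Sig i)⁻¹ * Mm i).trace := by
      have h := sq_sum_le_card_mul_sum_sq
        (s := Finset.range m) (f := fun i => Real.sqrt (((Sig i)⁻¹ * Mm i).trace))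
      rw [Finset.card_range] at h
      calc (∑ i ∈ Finset.range m, Real.sqrt (((Sig i)⁻¹ * Mm i).trace)) ^ 2
          ≤ (m:ℝ) * ∑ i ∈ Finset.range m, Real.sqrt (((Sig i)⁻¹ * Mm i).trace) ^ 2 := h
        _ = m * ∑ i ∈ Finset.range m, ((Sig i)⁻¹ * Mm i).trace := by
            congr 1
            exact Finset.sum_congr rfl fun i hi =>
              Real.sq_sqrt (ht_nonneg i (Finset.mem_range.mp hi))
    have hstep2 : ∑ i ∈ Finset.range m, Real.sqrt (((Sig i)⁻¹ * Mm i).trace)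
        ≤ Real.sqrt (2 * m * d * Lg) := by
      rw [Real.le_sqrt (Finset.sum_nonneg fun i _ => Real.sqrt_nonneg _) (by positivity)]
      calc (∑ i ∈ Finset.range m, Real.sqrt (((Sig i)⁻¹ * Mm i).trace)) ^ 2
          ≤ m * ∑ i ∈ Finset.range m, ((Sig i)⁻¹ * Mm i).trace := hsq
        _ ≤ m * (2 * d * Lg) := mul_le_mul_of_nonneg_left hT hm0.le
        _ = 2 * m * d * Lg := by ring
    exact hstep1.trans hstep2
  refine ⟨hmain, ?_⟩
  have hgsum : (∑ i ∈ Finset.range m, ∫ φ, Real.sqrt (φ ⬝ᵥ ((Sig i)⁻¹).mulVec φ) ∂(μ i))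
      ≤ ∑ _i ∈ Finset.range m, Real.sqrt (2 * d * Lg / m) := by
    rw [Finset.sum_const, Finset.card_range, nsmul_eq_mul]
    have heq : (m:ℝ) * Real.sqrt (2 * d * Lg / m) = Real.sqrt (2 * m * d * Lg) := by
      rw [show (2:ℝ) * m * d * Lg = (m:ℝ)^2 * (2 * d * Lg / m) by field_simp,
        Real.sqrt_mul (by positivity), Real.sqrt_sq hm0.le]
    rw [heq]
    exact hmain
  obtain ⟨i, hi, hle⟩ := Finset.exists_le_of_sum_le
    ⟨0, Finset.mem_range.mpr hm⟩ hgsum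
  exact ⟨i, Finset.mem_range.mp hi, hle⟩
end
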